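/- There exists a universal constant C > 0 such that the following holds. Let k ≥ 2, let M be a finite set, let v_1, …, v_n : 2^M → ℝ have marginals bounded by 1, and let t ≥ 1 be a parameter. Suppose there exists a fractional k-coloring χ : M → Δ_k such that (1) for every agent i ∈ [n] and all colors ℓ, ℓ' ∈ [k], F_i(χ_ℓ) = F_i(χ_{ℓ'}), where F_i is the multilinear extension of v_i, and (2) for each ℓ ∈ [k], the vector χ_ℓ has at most t non-integral coordinates. Then there exists a k-coloring χ' : M → [k] with disc(V, k, χ') ≤ C·√(t·log(nk)); in particular disc(V, k) ≤ C·√(t·log(nk)). -/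

import Mathlib

open Finset Real

set_option linter.unusedSectionVars false
set_option maxHeartbeats 1000000


/-- The multilinear extension of a set function `v : Finset α → ℝ`:
`F(x) = ∑_{S ⊆ M} v(S) ∏_{j ∈ S} x_j ∏_{j ∉ S} (1 - x_j)`. -/
noncomputable def mlext {α : Type*} [Fintype α] [DecidableEq α]
    (v : Finset α → ℝ) (x : α → ℝ) : ℝ :=
  ∑ S : Finset α, v S * ((∏ j ∈ S, x j) * ∏ j ∈ Sᶜ, (1 - x j))

section RoundingAux

variable {α β : Type} [Fintype α] [DecidableEq α] [Fintype β] [DecidableEq β]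

noncomputable def wgt (p : α → β → ℝ) (g : α → β) : ℝ := ∏ j, p j (g j)

noncomputable def EE (p : α → β → ℝ) (f : (α → β) → ℝ) : ℝ := ∑ g : α → β, wgt p g * f g

lemma wgt_nonneg {p : α → β → ℝ} (hp0 : ∀ j b, 0 ≤ p j b) (g : α → β) : 0 ≤ wgt p g :=
  Finset.prod_nonneg fun j _ => hp0 j (g j)

lemma sum_wgt {p : α → β → ℝ} (hp1 : ∀ j, ∑ b, p j b = 1) : ∑ g : α → β, wgt p g = 1 := by
  have h := Fintype.prod_sum (fun (j : α) (b : β) => p j b)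
  simp only [hp1, Finset.prod_const_one] at h
  simpa [wgt] using h.symm

lemma EE_const {p : α → β → ℝ} (hp1 : ∀ j, ∑ b, p j b = 1) (c : ℝ) : EE p (fun _ => c) = c := by
  rw [EE, ← Finset.sum_mul, sum_wgt hp1, one_mul]

lemma EE_mono {p : α → β → ℝ} (hp0 : ∀ j b, 0 ≤ p j b) {f h : (α → β) → ℝ}
    (hfh : ∀ g, f g ≤ h g) : EE p f ≤ EE p h :=
  Finset.sum_le_sum fun g _ => mul_le_mul_of_nonneg_left (hfh g) (wgt_nonneg hp0 g)

lemma EE_smul {p : α → β → ℝ} (c : ℝ) (f : (α → β) → ℝ) :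
    EE p (fun g => c * f g) = c * EE p f := by
  simp [EE, Finset.mul_sum, mul_left_comm]


lemma EE_update {p : α → β → ℝ} (hp1 : ∀ j, ∑ b, p j b = 1) (j : α) (f : (α → β) → ℝ) :
    EE p (fun g => ∑ b, p j b * f (Function.update g j b)) = EE p f := by
  classical
  set e := Equiv.funSplitAt j β with he
  have eval_eq : ∀ (b : β) (r : {i // i ≠ j} → β), e.symm (b, r) j = b := by
    intro b r; simp [he, Equiv.funSplitAt_symm_apply]
  have eval_ne : ∀ (b : β) (r : {i // i ≠ j} → β) (i : α) (h : i ≠ j),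
      e.symm (b, r) i = r ⟨i, h⟩ := by
    intro b r i h; simp [he, Equiv.funSplitAt_symm_apply, h]
  have upd_symm : ∀ (b c : β) (r : {i // i ≠ j} → β),
      Function.update (e.symm (b, r)) j c = e.symm (c, r) := by
    intro b c r; funext i
    by_cases h : i = j
    · subst h; rw [Function.update_self, eval_eq]
    · rw [Function.update_of_ne h, eval_ne b r i h, eval_ne c r i h]
  have hsplit : ∀ F : (α → β) → ℝ,
      ∑ g : α → β, F g = ∑ b : β, ∑ r : {i // i ≠ j} → β, F (e.symm (b, r)) := by
    intro F
    rw [← Equiv.sum_comp e.symm F, Fintype.sum_prod_type]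
  have wsplit : ∀ (b : β) (r : {i // i ≠ j} → β),
      wgt p (e.symm (b, r)) = p j b * ∏ i : {i // i ≠ j}, p i.1 (r i) := by
    intro b r
    rw [wgt, Fintype.prod_eq_mul_prod_compl j, eval_eq]
    congr 1
    rw [Finset.prod_subtype (p := fun i => i ≠ j) ({j}ᶜ : Finset α) (fun x => by simp)
      (fun i => p i (e.symm (b, r) i))]
    apply Finset.prod_congr rfl
    intro i _
    rw [eval_ne b r i.1 i.2]
  rw [EE, EE, hsplit (fun g => wgt p g * ∑ b, p j b * f (Function.update g j b)),
    hsplit (fun g => wgt p g * f g)]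
  simp only [upd_symm, wsplit]
  calc ∑ c : β, ∑ r : {i // i ≠ j} → β,
        (p j c * ∏ i : {i // i ≠ j}, p i.1 (r i)) * ∑ b : β, p j b * f (e.symm (b, r))
      = ∑ c : β, p j c * ∑ b : β, ∑ r : {i // i ≠ j} → β,
          (p j b * ∏ i : {i // i ≠ j}, p i.1 (r i)) * f (e.symm (b, r)) := by
        refine Finset.sum_congr rfl fun c _ => ?_
        have l1 : ∀ r : {i // i ≠ j} → β,
            (p j c * ∏ i : {i // i ≠ j}, p i.1 (r i)) * ∑ b : β, p j b * f (e.symm (b, r)) =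
            ∑ b : β, (p j c * ∏ i : {i // i ≠ j}, p i.1 (r i)) * (p j b * f (e.symm (b, r))) :=
          fun r => Finset.mul_sum _ _ _
        simp only [l1]
        rw [Finset.sum_comm]
        simp only [Finset.mul_sum]
        exact Finset.sum_congr rfl fun b _ => Finset.sum_congr rfl fun r _ => by ring
    _ = ∑ b : β, ∑ r : {i // i ≠ j} → β,
          (p j b * ∏ i : {i // i ≠ j}, p i.1 (r i)) * f (e.symm (b, r)) := by
        rw [← Finset.sum_mul, hp1 j, one_mul]

lemma chord_bound (x lam : ℝ) (hx : |x| ≤ 1) :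
    Real.exp (lam * x) ≤ Real.cosh lam + x * Real.sinh lam := by
  obtain ⟨hx1, hx2⟩ := abs_le.mp hx
  have h1 : (0:ℝ) ≤ (1 + x)/2 := by linarith
  have h2 : (0:ℝ) ≤ (1 - x)/2 := by linarith
  have hs : (1 + x)/2 + (1 - x)/2 = 1 := by ring
  have hc := convexOn_exp.2 (Set.mem_univ lam) (Set.mem_univ (-lam)) h1 h2 hs
  simp only [smul_eq_mul] at hc
  have harg : (1 + x)/2 * lam + (1 - x)/2 * (-lam) = lam * x := by ring
  rw [harg] at hc
  calc Real.exp (lam * x) ≤ (1 + x)/2 * Real.exp lam + (1 - x)/2 * Real.exp (-lam) := hc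
    _ = Real.cosh lam + x * Real.sinh lam := by rw [Real.cosh_eq, Real.sinh_eq]; ring

lemma hoeffding_step (q : β → ℝ) (x : β → ℝ) (hq0 : ∀ b, 0 ≤ q b) (hq1 : ∑ b, q b = 1)
    (hx0 : ∑ b, q b * x b = 0) (hx1 : ∀ b, |x b| ≤ 1) (lam : ℝ) :
    ∑ b, q b * Real.exp (lam * x b) ≤ Real.exp (lam ^ 2 / 2) := by
  calc ∑ b, q b * Real.exp (lam * x b)
      ≤ ∑ b, q b * (Real.cosh lam + x b * Real.sinh lam) :=
        Finset.sum_le_sum fun b _ =>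
          mul_le_mul_of_nonneg_left (chord_bound (x b) lam (hx1 b)) (hq0 b)
    _ = (∑ b, q b) * Real.cosh lam + (∑ b, q b * x b) * Real.sinh lam := by
        rw [Finset.sum_mul, Finset.sum_mul, ← Finset.sum_add_distrib]
        exact Finset.sum_congr rfl fun b _ => by ring
    _ = Real.cosh lam := by rw [hq1, hx0, one_mul, zero_mul, add_zero]
    _ ≤ Real.exp (lam ^ 2 / 2) := Real.cosh_le_exp_half_sq lam

lemma mgf_bound {p : α → β → ℝ} (hp0 : ∀ j b, 0 ≤ p j b) (hp1 : ∀ j, ∑ b, p j b = 1)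
    (T : Finset α) (f : (α → β) → ℝ)
    (hdep : ∀ g g' : α → β, (∀ j ∈ T, g j = g' j) → f g = f g')
    (hlip : ∀ (g : α → β) (j : α) (b : β), |f (Function.update g j b) - f g| ≤ 1)
    (lam : ℝ) :
    EE p (fun g => Real.exp (lam * (f g - EE p f))) ≤ Real.exp (lam ^ 2 * T.card / 2) := by
  classical
  induction T using Finset.induction_on generalizing f with
  | empty =>
    rcases isEmpty_or_nonempty (α → β) with hemp | hne
    · rw [EE, Finset.univ_eq_empty, Finset.sum_empty]
      positivity
    · obtain ⟨g₀⟩ := hne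
      have hconst : ∀ g, f g = f g₀ := fun g => hdep g g₀ (by simp)
      have hEf : EE p f = f g₀ := by
        have hf : f = fun _ => f g₀ := funext hconst
        rw [hf, EE_const hp1]
      have hone : (fun g => Real.exp (lam * (f g - EE p f))) = fun _ => (1:ℝ) := by
        funext g; rw [hconst g, hEf]; simp
      rw [hone, EE_const hp1]
      simp
  | @insert j s hj ih =>
    set h : (α → β) → ℝ := fun g => ∑ b, p j b * f (Function.update g j b) with hh
    have hEh : EE p h = EE p f := EE_update hp1 j f
    have hdep_h : ∀ g g' : α → β, (∀ i ∈ s, g i = g' i) → h g = h g' := by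
      intro g g' hgg'
      refine Finset.sum_congr rfl fun b _ => ?_
      rw [hdep (Function.update g j b) (Function.update g' j b) ?_]
      intro i hi
      rcases Finset.mem_insert.mp hi with rfl | his
      · rw [Function.update_self, Function.update_self]
      · have hij : i ≠ j := fun hij => hj (hij ▸ his)
        rw [Function.update_of_ne hij, Function.update_of_ne hij]
        exact hgg' i his
    have hlip_h : ∀ (g : α → β) (i : α) (b' : β), |h (Function.update g i b') - h g| ≤ 1 := by
      intro g i b'
      by_cases hij : i = j
      · subst hij
        have : h (Function.update g i b') = h g := by
          refine Finset.sum_congr rfl fun b _ => ?_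
          rw [Function.update_idem]
        rw [this, sub_self, abs_zero]; norm_num
      · have hcomm : ∀ b : β, Function.update (Function.update g i b') j b
            = Function.update (Function.update g j b) i b' := fun b =>
          Function.update_comm hij b' b g
        have hdiff : h (Function.update g i b') - h g
            = ∑ b, p j b * (f (Function.update (Function.update g j b) i b')
                - f (Function.update g j b)) := by
          rw [hh]
          simp only [hcomm, mul_sub, Finset.sum_sub_distrib]
        rw [hdiff]
        calc |∑ b, p j b * (f (Function.update (Function.update g j b) i b')
                - f (Function.update g j b))|
            ≤ ∑ b, |p j b * (f (Function.update (Function.update g j b) i b')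
                - f (Function.update g j b))| := Finset.abs_sum_le_sum_abs _ _
          _ ≤ ∑ b, p j b := by
              refine Finset.sum_le_sum fun b _ => ?_
              rw [abs_mul, abs_of_nonneg (hp0 j b)]
              exact mul_le_of_le_one_right (hp0 j b) (hlip _ i b')
          _ = 1 := hp1 j
    have key : EE p (fun g => Real.exp (lam * (f g - EE p f)))
        = EE p (fun g => ∑ b, p j b * Real.exp (lam * (f (Function.update g j b) - EE p f))) :=
      (EE_update hp1 j _).symm
    have step : ∀ g : α → β, ∑ b, p j b * Real.exp (lam * (f (Function.update g j b) - EE p f))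
        ≤ Real.exp (lam ^ 2 / 2) * Real.exp (lam * (h g - EE p f)) := by
      intro g
      have hxmean : ∑ b, p j b * (f (Function.update g j b) - h g) = 0 := by
        simp only [hh, mul_sub, Finset.sum_sub_distrib, ← Finset.sum_mul, hp1 j, one_mul]
        ring_nf
      have hxabs : ∀ b : β, |f (Function.update g j b) - h g| ≤ 1 := by
        intro b
        have hrw : f (Function.update g j b) - h g
            = ∑ c, p j c * (f (Function.update g j b) - f (Function.update g j c)) := by
          simp only [mul_sub, Finset.sum_sub_distrib, ← Finset.sum_mul, hp1 j, one_mul, hh]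
        rw [hrw]
        calc |∑ c, p j c * (f (Function.update g j b) - f (Function.update g j c))|
            ≤ ∑ c, |p j c * (f (Function.update g j b) - f (Function.update g j c))| :=
              Finset.abs_sum_le_sum_abs _ _
          _ ≤ ∑ c, p j c := by
              refine Finset.sum_le_sum fun c _ => ?_
              rw [abs_mul, abs_of_nonneg (hp0 j c)]
              refine mul_le_of_le_one_right (hp0 j c) ?_
              have : Function.update g j c = Function.update (Function.update g j b) j c := by
                rw [Function.update_idem]
              rw [this, abs_sub_comm]
              exact hlip (Function.update g j b) j c
          _ = 1 := hp1 j
      calc ∑ b, p j b * Real.exp (lam * (f (Function.update g j b) - EE p f))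
          = (∑ b, p j b * Real.exp (lam * (f (Function.update g j b) - h g)))
              * Real.exp (lam * (h g - EE p f)) := by
            rw [Finset.sum_mul]
            refine Finset.sum_congr rfl fun b _ => ?_
            rw [mul_assoc, ← Real.exp_add]
            ring_nf
        _ ≤ Real.exp (lam ^ 2 / 2) * Real.exp (lam * (h g - EE p f)) := by
            refine mul_le_mul_of_nonneg_right ?_ (Real.exp_nonneg _)
            exact hoeffding_step (p j) (fun b => f (Function.update g j b) - h g)
              (hp0 j) (hp1 j) hxmean hxabs lam
    calc EE p (fun g => Real.exp (lam * (f g - EE p f)))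
        = EE p (fun g => ∑ b, p j b * Real.exp (lam * (f (Function.update g j b) - EE p f))) := key
      _ ≤ EE p (fun g => Real.exp (lam ^ 2 / 2) * Real.exp (lam * (h g - EE p f))) :=
          EE_mono hp0 step
      _ = Real.exp (lam ^ 2 / 2) * EE p (fun g => Real.exp (lam * (h g - EE p h))) := by
          rw [EE_smul]
          simp only [hEh]
      _ ≤ Real.exp (lam ^ 2 / 2) * Real.exp (lam ^ 2 * s.card / 2) :=
          mul_le_mul_of_nonneg_left (ih h hdep_h hlip_h) (Real.exp_nonneg _)
      _ = Real.exp (lam ^ 2 * (insert j s).card / 2) := by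
          rw [← Real.exp_add, Finset.card_insert_of_notMem hj]
          push_cast
          ring_nf

lemma tail_bound {p : α → β → ℝ} (hp0 : ∀ j b, 0 ≤ p j b) (hp1 : ∀ j, ∑ b, p j b = 1)
    (T : Finset α) (f : (α → β) → ℝ)
    (hdep : ∀ g g' : α → β, (∀ j ∈ T, g j = g' j) → f g = f g')
    (hlip : ∀ (g : α → β) (j : α) (b : β), |f (Function.update g j b) - f g| ≤ 1)
    {t a : ℝ} (hT : (T.card : ℝ) ≤ t) (ht : 0 < t) (ha : 0 ≤ a)
    (B : Finset (α → β)) (hB : ∀ g ∈ B, a ≤ f g - EE p f) :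
    ∑ g ∈ B, wgt p g ≤ Real.exp (-(a ^ 2) / (2 * t)) := by
  set lam := a / t with hlam
  have hlam0 : 0 ≤ lam := div_nonneg ha ht.le
  set c := EE p f with hc
  have hm := mgf_bound hp0 hp1 T f hdep hlip lam
  rw [← hc] at hm
  calc ∑ g ∈ B, wgt p g
      ≤ ∑ g ∈ B, wgt p g * Real.exp (lam * (f g - c) - lam * a) := by
        refine Finset.sum_le_sum fun g hg => ?_
        have h1 : (1:ℝ) ≤ Real.exp (lam * (f g - c) - lam * a) := by
          rw [← Real.exp_zero]
          apply Real.exp_le_exp.mpr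
          have h2 := hB g hg
          nlinarith
        exact le_mul_of_one_le_right (wgt_nonneg hp0 g) h1
    _ ≤ ∑ g : α → β, wgt p g * Real.exp (lam * (f g - c) - lam * a) := by
        apply Finset.sum_le_sum_of_subset_of_nonneg (Finset.subset_univ B)
        intro g _ _
        exact mul_nonneg (wgt_nonneg hp0 g) (Real.exp_nonneg _)
    _ = Real.exp (-(lam * a)) * EE p (fun g => Real.exp (lam * (f g - c))) := by
        rw [EE, Finset.mul_sum]
        refine Finset.sum_congr rfl fun g _ => ?_
        rw [show lam * (f g - c) - lam * a = lam * (f g - c) + -(lam * a) by ring,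
          Real.exp_add]
        ring
    _ ≤ Real.exp (-(lam * a)) * Real.exp (lam ^ 2 * T.card / 2) :=
        mul_le_mul_of_nonneg_left hm (Real.exp_nonneg _)
    _ = Real.exp (-(lam * a) + lam ^ 2 * T.card / 2) := (Real.exp_add _ _).symm
    _ ≤ Real.exp (-(a ^ 2) / (2 * t)) := by
        apply Real.exp_le_exp.mpr
        have h2 : lam ^ 2 * T.card / 2 ≤ lam ^ 2 * t / 2 := by nlinarith [sq_nonneg lam]
        have h3 : -(lam * a) + lam ^ 2 * t / 2 = -(a ^ 2) / (2 * t) := by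
          rw [hlam]; field_simp; ring
        linarith

lemma EE_eq_mlext {p : α → β → ℝ} (hp1 : ∀ j, ∑ b, p j b = 1) (ℓ : β) (v : Finset α → ℝ) :
    EE p (fun g => v (Finset.univ.filter fun j => g j = ℓ)) = mlext v (fun j => p j ℓ) := by
  have hpt : ∀ g : α → β, v (Finset.univ.filter fun j => g j = ℓ)
      = ∑ S : Finset α, v S * ((∏ j ∈ S, (if g j = ℓ then (1:ℝ) else 0))
          * ∏ j ∈ Sᶜ, (1 - if g j = ℓ then (1:ℝ) else 0)) := by
    intro g
    rw [Finset.sum_eq_single (Finset.univ.filter fun j => g j = ℓ)]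
    · have h1 : ∏ j ∈ (Finset.univ.filter fun j => g j = ℓ),
          (if g j = ℓ then (1:ℝ) else 0) = 1 :=
        Finset.prod_eq_one fun j hj => by rw [if_pos (Finset.mem_filter.mp hj).2]
      have h2 : ∏ j ∈ (Finset.univ.filter fun j => g j = ℓ)ᶜ,
          (1 - if g j = ℓ then (1:ℝ) else 0) = 1 := by
        refine Finset.prod_eq_one fun j hj => ?_
        have hgj : ¬ g j = ℓ := by
          have := Finset.mem_compl.mp hj
          simpa using this
        rw [if_neg hgj]; ring
      rw [h1, h2]; ring
    · intro S _ hS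
      have hmismatch : ∃ j, ¬ (j ∈ S ↔ g j = ℓ) := by
        by_contra hcon
        push_neg at hcon
        apply hS
        ext j
        simp only [Finset.mem_filter, Finset.mem_univ, true_and]
        exact hcon j
      obtain ⟨j, hj⟩ := hmismatch
      by_cases hjS : j ∈ S <;> by_cases hgl : g j = ℓ
      · exact absurd (iff_of_true hjS hgl) hj
      · rw [Finset.prod_eq_zero hjS (show (if g j = ℓ then (1:ℝ) else 0) = 0 by simp [hgl])]
        ring
      · rw [Finset.prod_eq_zero (Finset.mem_compl.mpr hjS)
          (show (1 - if g j = ℓ then (1:ℝ) else 0) = 0 by simp [hgl])]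
        ring
      · exact absurd (iff_of_false hjS hgl) hj
    · intro h
      exact absurd (Finset.mem_univ _) h
  have hprodS : ∀ S : Finset α,
      ∑ g : α → β, wgt p g * ((∏ j ∈ S, (if g j = ℓ then (1:ℝ) else 0))
          * ∏ j ∈ Sᶜ, (1 - if g j = ℓ then (1:ℝ) else 0))
      = (∏ j ∈ S, p j ℓ) * ∏ j ∈ Sᶜ, (1 - p j ℓ) := by
    intro S
    have hterm : ∀ g : α → β, wgt p g * ((∏ j ∈ S, (if g j = ℓ then (1:ℝ) else 0))
          * ∏ j ∈ Sᶜ, (1 - if g j = ℓ then (1:ℝ) else 0))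
        = ∏ j : α, (p j (g j) * (if j ∈ S then (if g j = ℓ then (1:ℝ) else 0)
            else (1 - if g j = ℓ then (1:ℝ) else 0))) := by
      intro g
      have hX : (∏ j ∈ S, (if g j = ℓ then (1:ℝ) else 0))
          * ∏ j ∈ Sᶜ, (1 - if g j = ℓ then (1:ℝ) else 0)
          = ∏ j : α, (if j ∈ S then (if g j = ℓ then (1:ℝ) else 0)
              else (1 - if g j = ℓ then (1:ℝ) else 0)) := by
        rw [← Finset.prod_mul_prod_compl S (fun j => if j ∈ S then (if g j = ℓ then (1:ℝ) else 0)
            else (1 - if g j = ℓ then (1:ℝ) else 0))]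
        congr 1
        · exact Finset.prod_congr rfl fun j hj => (if_pos hj).symm
        · exact Finset.prod_congr rfl fun j hj => (if_neg (Finset.mem_compl.mp hj)).symm
      rw [hX, wgt, ← Finset.prod_mul_distrib]
    simp only [hterm]
    rw [← Fintype.prod_sum (fun (j : α) (b : β) => p j b * (if j ∈ S then (if b = ℓ then (1:ℝ) else 0)
        else (1 - if b = ℓ then (1:ℝ) else 0)))]
    have hinner : ∀ j : α, (∑ b, p j b * (if j ∈ S then (if b = ℓ then (1:ℝ) else 0)
        else (1 - if b = ℓ then (1:ℝ) else 0))) = if j ∈ S then p j ℓ else 1 - p j ℓ := by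
      intro j
      by_cases hj : j ∈ S
      · simp [hj, mul_ite, mul_one, mul_zero, Finset.sum_ite_eq']
      · simp [hj, mul_sub, mul_ite, mul_one, mul_zero, Finset.sum_sub_distrib, hp1 j,
          Finset.sum_ite_eq']
    simp only [hinner]
    rw [← Finset.prod_mul_prod_compl S (fun j => if j ∈ S then p j ℓ else 1 - p j ℓ)]
    congr 1
    · exact Finset.prod_congr rfl fun j hj => if_pos hj
    · exact Finset.prod_congr rfl fun j hj => if_neg (Finset.mem_compl.mp hj)
  calc EE p (fun g => v (Finset.univ.filter fun j => g j = ℓ))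
      = ∑ g : α → β, ∑ S : Finset α, v S * (wgt p g * ((∏ j ∈ S, (if g j = ℓ then (1:ℝ) else 0))
          * ∏ j ∈ Sᶜ, (1 - if g j = ℓ then (1:ℝ) else 0))) := by
        rw [EE]
        refine Finset.sum_congr rfl fun g _ => ?_
        rw [hpt g, Finset.mul_sum]
        exact Finset.sum_congr rfl fun S _ => by ring
    _ = ∑ S : Finset α, ∑ g : α → β, v S * (wgt p g * ((∏ j ∈ S, (if g j = ℓ then (1:ℝ) else 0))
          * ∏ j ∈ Sᶜ, (1 - if g j = ℓ then (1:ℝ) else 0))) := Finset.sum_comm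
    _ = ∑ S : Finset α, v S * ((∏ j ∈ S, p j ℓ) * ∏ j ∈ Sᶜ, (1 - p j ℓ)) := by
        refine Finset.sum_congr rfl fun S _ => ?_
        rw [← Finset.mul_sum, hprodS S]
    _ = mlext v (fun j => p j ℓ) := rfl

end RoundingAux



/-- **Rounding lemma.** There is a universal constant `C > 0` such that:
given `n` valuations with marginals bounded by `1` and a fractional `k`-coloring
`χ : α → Δ_k` whose color-vectors `χ_ℓ` all have equal multilinear value for every
agent and have at most `t` non-integral coordinates each, there exists an integral
`k`-coloring `χ'` with discrepancy at most `C * √(t * log (n * k))`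
(in particular `disc(V, k) ≤ C * √(t * log (n * k))`). -/
theorem rounding_lemma :
    ∃ C : ℝ, 0 < C ∧
      ∀ (k n t : ℕ), 2 ≤ k → 1 ≤ t →
      ∀ (α : Type) [Fintype α] [DecidableEq α]
        (v : Fin n → Finset α → ℝ),
        (∀ (i : Fin n) (S : Finset α) (j : α), |v i (insert j S) - v i S| ≤ 1) →
        ∀ (χ : α → Fin k → ℝ),
          (∀ (j : α) (ℓ : Fin k), χ j ℓ ∈ Set.Icc (0 : ℝ) 1) →
          (∀ j : α, ∑ ℓ : Fin k, χ j ℓ = 1) →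
          (∀ (i : Fin n) (ℓ ℓ' : Fin k),
            mlext (v i) (fun j => χ j ℓ) = mlext (v i) (fun j => χ j ℓ')) →
          (∀ ℓ : Fin k, {j : α | χ j ℓ ≠ 0 ∧ χ j ℓ ≠ 1}.ncard ≤ t) →
          ∃ χ' : α → Fin k,
            ∀ (i : Fin n) (ℓ ℓ' : Fin k),
              |v i (Finset.univ.filter fun j => χ' j = ℓ) -
                v i (Finset.univ.filter fun j => χ' j = ℓ')| ≤
                C * Real.sqrt (t * Real.log (n * k)) := by
  classical
  refine ⟨5, by norm_num, ?_⟩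
  intro k n t hk ht α _ _ v hv χ hχmem hχsum hmle hfrac
  rcases Nat.eq_zero_or_pos n with hn | hn
  · subst hn
    exact ⟨fun _ => ⟨0, by omega⟩, fun i => i.elim0⟩
  have hp0 : ∀ (j : α) (b : Fin k), 0 ≤ χ j b := fun j b => (hχmem j b).1
  set T : Fin k → Finset α := fun ℓ => Finset.univ.filter (fun j => χ j ℓ ≠ 0 ∧ χ j ℓ ≠ 1)
    with hT
  have hTcard : ∀ ℓ, ((T ℓ).card : ℝ) ≤ (t : ℝ) := by
    intro ℓ
    have h1 := hfrac ℓ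
    have h2 : {j : α | χ j ℓ ≠ 0 ∧ χ j ℓ ≠ 1}.ncard = (T ℓ).card := by
      rw [Set.ncard_eq_toFinset_card']
      congr 1
      ext j
      simp [hT]
    rw [h2] at h1
    exact_mod_cast h1
  set f : Fin n → Fin k → (α → Fin k) → ℝ := fun i ℓ g =>
    v i (Finset.univ.filter fun j => if j ∈ T ℓ then g j = ℓ else χ j ℓ = 1) with hf
  have one_pt : ∀ (i : Fin n) (S S' : Finset α) (j : α),
      (∀ x, x ≠ j → (x ∈ S ↔ x ∈ S')) → |v i S - v i S'| ≤ 1 := by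
    intro i S S' j hSS'
    by_cases hjS : j ∈ S <;> by_cases hjS' : j ∈ S'
    · have hSeq : S = S' := by
        ext x
        by_cases hx : x = j
        · subst hx; simp [hjS, hjS']
        · exact hSS' x hx
      rw [hSeq, sub_self, abs_zero]; norm_num
    · have hSeq : S = insert j S' := by
        ext x
        by_cases hx : x = j
        · subst hx; simp [hjS]
        · rw [Finset.mem_insert]; simp [hx, hSS' x hx]
      rw [hSeq]
      exact hv i S' j
    · have hSeq : S' = insert j S := by
        ext x
        by_cases hx : x = j
        · subst hx; simp [hjS']
        · rw [Finset.mem_insert]; simp [hx, (hSS' x hx).symm]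
      rw [abs_sub_comm, hSeq]
      exact hv i S j
    · have hSeq : S = S' := by
        ext x
        by_cases hx : x = j
        · subst hx; simp [hjS, hjS']
        · exact hSS' x hx
      rw [hSeq, sub_self, abs_zero]; norm_num
  have hlip : ∀ (i : Fin n) (ℓ : Fin k) (g : α → Fin k) (j : α) (b : Fin k),
      |f i ℓ (Function.update g j b) - f i ℓ g| ≤ 1 := by
    intro i ℓ g j b
    refine one_pt i _ _ j fun x hx => ?_
    simp only [hf, Finset.mem_filter, Finset.mem_univ, true_and, Function.update_of_ne hx]
  have hdep : ∀ (i : Fin n) (ℓ : Fin k) (g g' : α → Fin k),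
      (∀ j ∈ T ℓ, g j = g' j) → f i ℓ g = f i ℓ g' := by
    intro i ℓ g g' hgg'
    simp only [hf]
    congr 1
    ext j
    simp only [Finset.mem_filter, Finset.mem_univ, true_and]
    by_cases hj : j ∈ T ℓ
    · rw [if_pos hj, if_pos hj, hgg' j hj]
    · rw [if_neg hj, if_neg hj]
  have hsupp : ∀ (g : α → Fin k), wgt χ g ≠ 0 → ∀ ℓ : Fin k,
      (Finset.univ.filter fun j => g j = ℓ)
        = (Finset.univ.filter fun j => if j ∈ T ℓ then g j = ℓ else χ j ℓ = 1) := by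
    intro g hwg ℓ
    have hpg : ∀ j, χ j (g j) ≠ 0 := by
      intro j h0
      exact hwg (Finset.prod_eq_zero (Finset.mem_univ j) h0)
    ext j
    simp only [Finset.mem_filter, Finset.mem_univ, true_and]
    by_cases hj : j ∈ T ℓ
    · rw [if_pos hj]
    · rw [if_neg hj]
      have hor : χ j ℓ = 0 ∨ χ j ℓ = 1 := by
        rw [hT] at hj
        simp only [Finset.mem_filter, Finset.mem_univ, true_and, ne_eq, not_and, not_not] at hj
        by_cases h0 : χ j ℓ = 0
        · exact Or.inl h0
        · exact Or.inr (hj h0)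
      rcases hor with h0 | h1
      · constructor
        · intro hgj
          exfalso
          apply hpg j
          rw [hgj]
          exact h0
        · intro h1
          rw [h0] at h1
          norm_num at h1
      · have hzero : ∀ b, b ≠ ℓ → χ j b = 0 := by
          intro b hb
          have hsum := hχsum j
          rw [← Finset.add_sum_erase _ _ (Finset.mem_univ ℓ)] at hsum
          have hz : ∑ b ∈ Finset.univ.erase ℓ, χ j b = 0 := by
            rw [h1] at hsum; linarith
          exact (Finset.sum_eq_zero_iff_of_nonneg
            (fun b _ => hp0 j b)).mp hz b (Finset.mem_erase.mpr ⟨hb, Finset.mem_univ b⟩)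
        have hgj : g j = ℓ := by
          by_contra hne
          exact hpg j (hzero (g j) hne)
        exact iff_of_true hgj h1
  have hmean : ∀ (i : Fin n) (ℓ : Fin k), EE χ (f i ℓ) = mlext (v i) (fun j => χ j ℓ) := by
    intro i ℓ
    have h1 : EE χ (f i ℓ) = EE χ (fun g => v i (Finset.univ.filter fun j => g j = ℓ)) := by
      rw [EE, EE]
      refine Finset.sum_congr rfl fun g _ => ?_
      by_cases hw : wgt χ g = 0
      · rw [hw, zero_mul, zero_mul]
      · simp only [hf]
        rw [← hsupp g hw ℓ]
    rw [h1, EE_eq_mlext hχsum ℓ (v i)]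
  -- numerics
  have ht0 : (0:ℝ) < t := by exact_mod_cast Nat.lt_of_lt_of_le Nat.zero_lt_one ht
  have hnk2n : (2:ℕ) ≤ n * k := by nlinarith
  have hnk2 : (2:ℝ) ≤ (n:ℝ) * k := by exact_mod_cast hnk2n
  have h4nk : (0:ℝ) < 4 * n * k := by nlinarith
  set a : ℝ := Real.sqrt (2 * t * Real.log (4 * n * k)) with ha
  have ha0 : 0 ≤ a := Real.sqrt_nonneg _
  have hlog4nk0 : 0 ≤ Real.log (4 * (n:ℝ) * k) := Real.log_nonneg (by nlinarith)
  have ha2 : a ^ 2 = 2 * t * Real.log (4 * n * k) := Real.sq_sqrt (by positivity)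
  have hexp : Real.exp (-(a ^ 2) / (2 * t)) = 1 / (4 * n * k) := by
    rw [ha2, show -(2 * (t:ℝ) * Real.log (4 * n * k)) / (2 * t)
      = -Real.log (4 * (n:ℝ) * k) by field_simp, Real.exp_neg, Real.exp_log h4nk, one_div]
  set μ : Fin n → Fin k → ℝ := fun i ℓ => EE χ (f i ℓ) with hμ
  have htailp : ∀ (i : Fin n) (ℓ : Fin k),
      ∑ g ∈ Finset.univ.filter (fun g : α → Fin k => a ≤ f i ℓ g - μ i ℓ), wgt χ g
        ≤ 1 / (4 * n * k) := by
    intro i ℓ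
    rw [← hexp]
    exact tail_bound hp0 hχsum (T ℓ) (f i ℓ) (hdep i ℓ) (hlip i ℓ) (hTcard ℓ) ht0 ha0 _
      (fun g hg => by simpa [hμ] using (Finset.mem_filter.mp hg).2)
  have htailm : ∀ (i : Fin n) (ℓ : Fin k),
      ∑ g ∈ Finset.univ.filter (fun g : α → Fin k => a ≤ μ i ℓ - f i ℓ g), wgt χ g
        ≤ 1 / (4 * n * k) := by
    intro i ℓ
    rw [← hexp]
    have hdep' : ∀ g g' : α → Fin k, (∀ j ∈ T ℓ, g j = g' j) →
        μ i ℓ - f i ℓ g = μ i ℓ - f i ℓ g' := fun g g' h => by rw [hdep i ℓ g g' h]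
    have hlip' : ∀ (g : α → Fin k) (j : α) (b : Fin k),
        |(μ i ℓ - f i ℓ (Function.update g j b)) - (μ i ℓ - f i ℓ g)| ≤ 1 := by
      intro g j b
      rw [show (μ i ℓ - f i ℓ (Function.update g j b)) - (μ i ℓ - f i ℓ g)
        = -(f i ℓ (Function.update g j b) - f i ℓ g) by ring, abs_neg]
      exact hlip i ℓ g j b
    have hE0 : EE χ (fun g => μ i ℓ - f i ℓ g) = 0 := by
      have hEs : EE χ (fun g => μ i ℓ - f i ℓ g) = μ i ℓ - EE χ (f i ℓ) := by
        rw [EE, EE]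
        simp only [mul_sub]
        rw [Finset.sum_sub_distrib, ← Finset.sum_mul, sum_wgt hχsum, one_mul]
      rw [hEs]
      simp [hμ]
    exact tail_bound hp0 hχsum (T ℓ) (fun g => μ i ℓ - f i ℓ g) hdep' hlip'
      (hTcard ℓ) ht0 ha0 _
      (fun g hg => by
        rw [hE0, sub_zero]
        exact (Finset.mem_filter.mp hg).2)
  have hgood : ∃ g : α → Fin k, wgt χ g ≠ 0 ∧ ∀ i ℓ, |f i ℓ g - μ i ℓ| ≤ a := by
    by_contra hcon
    push_neg at hcon
    set Bad : Finset (α → Fin k) := Finset.univ.filter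
      (fun g => ∃ i ℓ, a < |f i ℓ g - μ i ℓ|) with hBad
    have h1 : (1:ℝ) ≤ ∑ g ∈ Bad, wgt χ g := by
      have hsplit := Finset.sum_filter_add_sum_filter_not Finset.univ
        (fun g : α → Fin k => ∃ i ℓ, a < |f i ℓ g - μ i ℓ|) (wgt χ)
      have hzero : ∑ g ∈ Finset.univ.filter
          (fun g : α → Fin k => ¬ ∃ i ℓ, a < |f i ℓ g - μ i ℓ|), wgt χ g = 0 := by
        refine Finset.sum_eq_zero fun g hg => ?_
        have hng := (Finset.mem_filter.mp hg).2
        by_contra hw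
        push_neg at hng
        obtain ⟨i, ℓ, hiℓ⟩ := hcon g hw
        exact absurd hiℓ (not_lt.mpr (hng i ℓ))
      have h1e : (1:ℝ) = ∑ g ∈ Bad, wgt χ g := by
        rw [← sum_wgt hχsum, ← hsplit, hzero, add_zero]
      exact le_of_eq h1e
    set F : (Fin n × Fin k) → (α → Fin k) → ℝ := fun q g =>
      (if a ≤ f q.1 q.2 g - μ q.1 q.2 then wgt χ g else 0)
        + (if a ≤ μ q.1 q.2 - f q.1 q.2 g then wgt χ g else 0) with hF
    have hF0 : ∀ q g, 0 ≤ F q g := by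
      intro q g
      have hw := wgt_nonneg hp0 g
      simp only [hF]
      split_ifs <;> linarith
    have h2 : ∑ g ∈ Bad, wgt χ g ≤ ∑ q : Fin n × Fin k, ∑ g : α → Fin k, F q g := by
      calc ∑ g ∈ Bad, wgt χ g ≤ ∑ g ∈ Bad, ∑ q : Fin n × Fin k, F q g := by
            refine Finset.sum_le_sum fun g hg => ?_
            obtain ⟨i, ℓ, hiℓ⟩ := (Finset.mem_filter.mp hg).2
            have hsingle : wgt χ g ≤ F (i, ℓ) g := by
              have hw := wgt_nonneg hp0 g
              simp only [hF]
              rcases lt_abs.mp hiℓ with h | h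
              · rw [if_pos (le_of_lt h)]
                split_ifs <;> linarith
              · rw [if_pos (by linarith : a ≤ μ i ℓ - f i ℓ g)]
                split_ifs <;> linarith
            exact le_trans hsingle
              (Finset.single_le_sum (fun q _ => hF0 q g) (Finset.mem_univ (i, ℓ)))
        _ ≤ ∑ g : α → Fin k, ∑ q : Fin n × Fin k, F q g := by
            refine Finset.sum_le_sum_of_subset_of_nonneg (Finset.subset_univ Bad) ?_
            intro g _ _
            exact Finset.sum_nonneg fun q _ => hF0 q g
        _ = ∑ q : Fin n × Fin k, ∑ g : α → Fin k, F q g := Finset.sum_comm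
    have h3 : ∀ q : Fin n × Fin k, ∑ g : α → Fin k, F q g ≤ 2 / (4 * n * k) := by
      intro q
      have hsumF : ∑ g : α → Fin k, F q g
          = (∑ g ∈ Finset.univ.filter (fun g : α → Fin k => a ≤ f q.1 q.2 g - μ q.1 q.2),
              wgt χ g)
            + ∑ g ∈ Finset.univ.filter (fun g : α → Fin k => a ≤ μ q.1 q.2 - f q.1 q.2 g),
              wgt χ g := by
        rw [Finset.sum_filter, Finset.sum_filter, ← Finset.sum_add_distrib]
      rw [hsumF]
      have := htailp q.1 q.2
      have := htailm q.1 q.2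
      have : (2:ℝ) / (4 * n * k) = 1 / (4 * n * k) + 1 / (4 * n * k) := by ring
      linarith [htailp q.1 q.2, htailm q.1 q.2]
    have h4 : ∑ q : Fin n × Fin k, ∑ g : α → Fin k, F q g ≤ (1:ℝ) / 2 := by
      calc ∑ q : Fin n × Fin k, ∑ g : α → Fin k, F q g
          ≤ ∑ _q : Fin n × Fin k, (2:ℝ) / (4 * n * k) := Finset.sum_le_sum fun q _ => h3 q
        _ = (n * k : ℝ) * (2 / (4 * n * k)) := by
            rw [Finset.sum_const, Finset.card_univ, Fintype.card_prod, Fintype.card_fin,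
              Fintype.card_fin, nsmul_eq_mul]
            push_cast
            ring
        _ = 1 / 2 := by
            field_simp
            ring
    linarith
  obtain ⟨g, hwg, hclose⟩ := hgood
  refine ⟨g, ?_⟩
  intro i ℓ ℓ'
  have hset : ∀ ℓ'' : Fin k, v i (Finset.univ.filter fun j => g j = ℓ'') = f i ℓ'' g := by
    intro ℓ''
    simp only [hf]
    rw [hsupp g hwg ℓ'']
  have hμeq : μ i ℓ = μ i ℓ' := by
    simp only [hμ]
    rw [hmean i ℓ, hmean i ℓ']
    exact hmle i ℓ ℓ'
  have habs : |v i (Finset.univ.filter fun j => g j = ℓ)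
      - v i (Finset.univ.filter fun j => g j = ℓ')| ≤ a + a := by
    rw [hset ℓ, hset ℓ']
    calc |f i ℓ g - f i ℓ' g|
        = |(f i ℓ g - μ i ℓ) - (f i ℓ' g - μ i ℓ')| := by rw [hμeq]; ring_nf
      _ ≤ |f i ℓ g - μ i ℓ| + |f i ℓ' g - μ i ℓ'| := abs_sub _ _
      _ ≤ a + a := add_le_add (hclose i ℓ) (hclose i ℓ')
  -- final numeric bound
  have hlog2 : Real.log 2 ≤ Real.log ((n:ℝ) * k) := Real.log_le_log (by norm_num) hnk2
  have hlognk0 : 0 ≤ Real.log ((n:ℝ) * k) :=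
    le_trans (Real.log_nonneg one_le_two) hlog2
  have hnk0 : (0:ℝ) < (n:ℝ) * k := by nlinarith
  have hlog4nk : Real.log (4 * (n:ℝ) * k) ≤ 3 * Real.log ((n:ℝ) * k) := by
    rw [show (4:ℝ) * n * k = 4 * ((n:ℝ) * k) by ring,
      Real.log_mul (by norm_num) (ne_of_gt hnk0)]
    have h4 : Real.log 4 = 2 * Real.log 2 := by
      rw [show (4:ℝ) = 2 ^ 2 by norm_num, Real.log_pow]
      push_cast
      ring
    rw [h4]
    linarith
  have hfinal : a + a ≤ 5 * Real.sqrt (t * Real.log ((n:ℝ) * k)) := by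
    have hle : 2 * (t:ℝ) * Real.log (4 * n * k) ≤ 6 * (t * Real.log ((n:ℝ) * k)) := by
      nlinarith [ht0.le, hlog4nk]
    have h1 : a ≤ Real.sqrt (6 * ((t:ℝ) * Real.log ((n:ℝ) * k))) := by
      rw [ha]
      exact Real.sqrt_le_sqrt hle
    have h2 : Real.sqrt (6 * ((t:ℝ) * Real.log ((n:ℝ) * k)))
        = Real.sqrt 6 * Real.sqrt ((t:ℝ) * Real.log ((n:ℝ) * k)) :=
      Real.sqrt_mul (by norm_num) _
    have h3 : Real.sqrt 6 ≤ 2.5 := by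
      rw [show (2.5:ℝ) = Real.sqrt (2.5 ^ 2) by rw [Real.sqrt_sq (by norm_num)]]
      exact Real.sqrt_le_sqrt (by norm_num)
    have h4 : 0 ≤ Real.sqrt ((t:ℝ) * Real.log ((n:ℝ) * k)) := Real.sqrt_nonneg _
    nlinarith [h1, h2, h3, h4]
  exact le_trans habs hfinal
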